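/- Let ρ_d > 0, b ∈ ℝ, and let α : [0,1] → (0, ∞) be continuous. Then the function L(λ) = ∫₀¹ α(x)·exp( (1/ρ_d)·∫₀ˣ (b − α(s) − λ) ds ) dx is continuous and strictly decreasing on ℝ, with L(λ) → 0 as λ → +∞ and L(λ) → +∞ as λ → −∞. -/

import Mathlib

open Real Set Filter

/-- The function `L(λ) = ∫₀¹ α(x) exp((1/ρ) ∫₀ˣ (b − α(s) − λ) ds) dx`. -/
noncomputable def Lfun (ρ b : ℝ) (α : ℝ → ℝ) (lam : ℝ) : ℝ :=
  ∫ x in (0 : ℝ)..1,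
    α x * Real.exp ((1 / ρ) * ∫ s in (0 : ℝ)..x, (b - α s - lam))

namespace Stmt6Aux

open MeasureTheory intervalIntegral

/-- The weight function `c(x) = α(x) exp((1/ρ) ∫₀ˣ (b − α(s)) ds)`. -/
noncomputable def cfun (ρ b : ℝ) (α : ℝ → ℝ) (x : ℝ) : ℝ :=
  α x * Real.exp ((1 / ρ) * ∫ s in (0 : ℝ)..x, (b - α s))

lemma cfun_cont (ρ b : ℝ) (α : ℝ → ℝ) (hα : Continuous α) :
    Continuous (cfun ρ b α) := by
  refine hα.mul (Real.continuous_exp.comp (continuous_const.mul ?_))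
  exact intervalIntegral.continuous_primitive
    (fun a b' => (continuous_const.sub hα).intervalIntegrable _ _) 0

lemma cfun_pos (ρ b : ℝ) (α : ℝ → ℝ) (hpos : ∀ x, 0 < α x) (x : ℝ) :
    0 < cfun ρ b α x :=
  mul_pos (hpos x) (Real.exp_pos _)

lemma Lfun_eq (ρ b : ℝ) (α : ℝ → ℝ) (hα : Continuous α) (lam : ℝ) :
    Lfun ρ b α lam
      = ∫ x in (0 : ℝ)..1, cfun ρ b α x * Real.exp (-(lam / ρ) * x) := by
  unfold Lfun cfun
  refine intervalIntegral.integral_congr fun x _ => ?_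
  have h1 : (∫ s in (0:ℝ)..x, (b - α s - lam))
      = (∫ s in (0:ℝ)..x, (b - α s)) - lam * x := by
    rw [intervalIntegral.integral_sub (f := fun s => b - α s) (g := fun _ => lam) ((continuous_const.sub hα).intervalIntegrable _ _)
      (intervalIntegrable_const), intervalIntegral.integral_const]
    simp [smul_eq_mul]; ring
  have h2 : (1/ρ) * ((∫ s in (0:ℝ)..x, (b - α s)) - lam * x)
      = (1/ρ) * (∫ s in (0:ℝ)..x, (b - α s)) + (-(lam/ρ) * x) := by ring
  rw [h1, h2, Real.exp_add, mul_assoc]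

end Stmt6Aux

/-- Let `ρ > 0`, `b ∈ ℝ`, `α : [0,1] → (0,∞)` continuous.  Then `L` is
continuous and strictly decreasing on `ℝ`, with `L(λ) → 0` as `λ → +∞` and
`L(λ) → +∞` as `λ → −∞`. -/
theorem stmt6 (ρ b : ℝ) (hρ : 0 < ρ) (α : ℝ → ℝ)
    (hαc : ContinuousOn α (Set.Icc 0 1))
    (hαpos : ∀ x ∈ Set.Icc (0 : ℝ) 1, 0 < α x) :
    Continuous (Lfun ρ b α) ∧
    StrictAnti (Lfun ρ b α) ∧
    Filter.Tendsto (Lfun ρ b α) Filter.atTop (nhds 0) ∧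
    Filter.Tendsto (Lfun ρ b α) Filter.atBot Filter.atTop := by
  classical
  open MeasureTheory intervalIntegral Stmt6Aux in
  -- Extend `α` continuously to all of `ℝ`.
  set α' : ℝ → ℝ := Set.IccExtend zero_le_one ((Set.Icc (0:ℝ) 1).restrict α) with hα'def
  have hα'c : Continuous α' := Continuous.Icc_extend' hαc.restrict
  have hα'pos : ∀ x, 0 < α' x := fun x =>
    hαpos _ (Set.projIcc (0:ℝ) 1 zero_le_one x).2
  have hagree : ∀ x ∈ Set.Icc (0:ℝ) 1, α' x = α x := fun x hx => by
    rw [hα'def, Set.IccExtend_of_mem _ _ hx]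
    rfl
  -- `Lfun` only depends on the values of `α` on `[0,1]`.
  have hLeq : Lfun ρ b α = Lfun ρ b α' := by
    funext lam
    unfold Lfun
    refine (intervalIntegral.integral_congr fun x hx => ?_).symm
    have hx' : x ∈ Set.Icc (0:ℝ) 1 := by
      rwa [Set.uIcc_of_le zero_le_one] at hx
    have hin : Set.EqOn (fun s => b - α' s - lam) (fun s => b - α s - lam)
        (Set.uIcc (0:ℝ) x) := by
      intro s hs
      rw [Set.uIcc_of_le hx'.1] at hs
      simp only
      rw [hagree s ⟨hs.1, hs.2.trans hx'.2⟩]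
    rw [hagree x hx', intervalIntegral.integral_congr hin]
  rw [hLeq]
  set c : ℝ → ℝ := cfun ρ b α' with hc_def
  have hc : Continuous c := cfun_cont ρ b α' hα'c
  have hcpos : ∀ x, 0 < c x := cfun_pos ρ b α' hα'pos
  have hL : ∀ lam, Lfun ρ b α' lam
      = ∫ x in (0:ℝ)..1, c x * Real.exp (-(lam / ρ) * x) :=
    Lfun_eq ρ b α' hα'c
  have hcontF : ∀ lam : ℝ, Continuous fun x => c x * Real.exp (-(lam / ρ) * x) :=
    fun lam => hc.mul (Real.continuous_exp.comp (by fun_prop))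
  refine ⟨?_, ?_, ?_, ?_⟩
  · -- Continuity
    have : Lfun ρ b α' = fun lam => ∫ x in (0:ℝ)..1, c x * Real.exp (-(lam / ρ) * x) :=
      funext hL
    rw [this]
    exact intervalIntegral.continuous_parametric_intervalIntegral_of_continuous'
      (f := fun lam x => c x * Real.exp (-(lam / ρ) * x)) (by fun_prop) 0 1
  · -- Strict antitonicity
    intro l1 l2 h12
    rw [hL l1, hL l2]
    have key : (0:ℝ) < (∫ x in (0:ℝ)..1, c x * Real.exp (-(l1 / ρ) * x))
        - ∫ x in (0:ℝ)..1, c x * Real.exp (-(l2 / ρ) * x) := by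
      rw [← intervalIntegral.integral_sub ((hcontF l1).intervalIntegrable _ _)
        ((hcontF l2).intervalIntegrable _ _)]
      refine intervalIntegral_pos_of_pos_on
        (((hcontF l1).sub (hcontF l2)).intervalIntegrable _ _) (fun x hx => ?_) one_pos
      have hexp : Real.exp (-(l2 / ρ) * x) < Real.exp (-(l1 / ρ) * x) := by
        apply Real.exp_lt_exp.2
        have : l1 / ρ < l2 / ρ := by apply div_lt_div_of_pos_right h12 hρ
        nlinarith [hx.1]
      have := mul_lt_mul_of_pos_left hexp (hcpos x)
      simpa [sub_pos] using this
    linarith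
  · -- Tendsto 0 at +∞
    have hset : ∀ lam, Lfun ρ b α' lam
        = ∫ x in Set.Ioc (0:ℝ) 1, c x * Real.exp (-(lam / ρ) * x) := fun lam => by
      rw [hL lam, intervalIntegral.integral_of_le zero_le_one]
    have : Filter.Tendsto
        (fun lam => ∫ x in Set.Ioc (0:ℝ) 1, c x * Real.exp (-(lam / ρ) * x))
        Filter.atTop (nhds 0) := by
      have h := MeasureTheory.tendsto_integral_filter_of_dominated_convergence
        (μ := MeasureTheory.volume.restrict (Set.Ioc (0:ℝ) 1)) (l := Filter.atTop)
        (F := fun lam x => c x * Real.exp (-(lam / ρ) * x)) (f := fun _ => (0:ℝ)) c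
        (Filter.Eventually.of_forall fun lam =>
          ((hcontF lam).aestronglyMeasurable).restrict) ?_ ?_ ?_
      · simpa using h
      · filter_upwards [Filter.eventually_ge_atTop (0:ℝ)] with lam hlam
        refine MeasureTheory.ae_restrict_of_forall_mem measurableSet_Ioc fun x hx => ?_
        have h1 : Real.exp (-(lam / ρ) * x) ≤ 1 := by
          apply Real.exp_le_one_iff.2
          have : 0 ≤ lam / ρ := div_nonneg hlam hρ.le
          nlinarith [hx.1.le]
        rw [Real.norm_eq_abs, abs_of_nonneg (mul_nonneg (hcpos x).le (Real.exp_pos _).le)]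
        nlinarith [hcpos x]
      · exact hc.integrableOn_Ioc
      · refine MeasureTheory.ae_restrict_of_forall_mem measurableSet_Ioc fun x hx => ?_
        have hxρ : 0 < x / ρ := div_pos hx.1 hρ
        have hexp : Filter.Tendsto (fun lam : ℝ => Real.exp (-(lam / ρ) * x))
            Filter.atTop (nhds 0) := by
          apply Real.tendsto_exp_atBot.comp
          have : (fun lam : ℝ => -(lam / ρ) * x) = fun lam => lam * (-(x / ρ)) := by
            funext lam; ring
          rw [this]
          exact Filter.Tendsto.atTop_mul_const_of_neg (by linarith) Filter.tendsto_id
        have := hexp.const_mul (c x)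
        simpa using this
    exact this.congr fun lam => (hset lam).symm
  · -- Tendsto +∞ at −∞
    set K : ℝ := ∫ x in (0:ℝ)..1, x * c x with hK_def
    have hKpos : 0 < K := by
      refine intervalIntegral_pos_of_pos_on
        ((continuous_id.mul hc).intervalIntegrable _ _) (fun x hx => ?_) one_pos
      exact mul_pos hx.1 (hcpos x)
    have hlow : ∀ lam : ℝ, (-(lam / ρ)) * K ≤ Lfun ρ b α' lam := by
      intro lam
      rw [hL lam, hK_def, ← intervalIntegral.integral_const_mul]
      refine intervalIntegral.integral_mono_on zero_le_one
        ((continuous_const.mul (continuous_id.mul hc)).intervalIntegrable _ _)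
        ((hcontF lam).intervalIntegrable _ _) fun x hx => ?_
      have h1 : -(lam / ρ) * x ≤ Real.exp (-(lam / ρ) * x) := by
        nlinarith [Real.add_one_le_exp (-(lam / ρ) * x)]
      have := mul_le_mul_of_nonneg_left h1 (hcpos x).le
      nlinarith [this]
    refine Filter.tendsto_atTop_mono hlow ?_
    have : (fun lam : ℝ => -(lam / ρ) * K) = fun lam => lam * (-(K / ρ)) := by
      funext lam; ring
    rw [this]
    refine Filter.Tendsto.atBot_mul_const_of_neg ?_ Filter.tendsto_id
    have : 0 < K / ρ := div_pos hKpos hρ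
    linarith
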